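/- Suppose α ∈ (0,1) and f* : X → {0,1} is measurable with P_p({x : f*(x) = 1}) = 1 and P_n({x : f*(x) = 0}) = 1. Then the weight function w = 1 − f* is feasible (i.e., ∫ (1−f*) dP_u = 1−α), for every measurable f : X → {0,1} one has (1/(1−α))·∫ (1−f*(x))·1{f(x) ≠ 0} dP_u(x) = ∫ 1{f(x) ≠ 0} dP_n(x), so that J(f, 1−f*) equals the positive-versus-negative risk of f, and in particular J(f*, 1−f*) = 0. -/

import Mathlib

open MeasureTheory

/-- A weight function `w : X → [0,1]` is feasible if it is measurable and `∫ w dP_u = 1−α`. -/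
def Feasible {X : Type*} [MeasurableSpace X] (Pu : Measure X) (α : ℝ) (w : X → ℝ) : Prop :=
  Measurable w ∧ (∀ x, w x ∈ Set.Icc (0:ℝ) 1) ∧ ∫ x, w x ∂Pu = 1 - α

/-- The CVIR objective with 0-1 loss:
`J(f, w) = ∫ 1{f ≠ 1} dP_p + (1/(1−α))·∫ w·1{f ≠ 0} dP_u`. -/
noncomputable def cvirJ {X : Type*} [MeasurableSpace X] (Pp Pu : Measure X) (α : ℝ)
    (f w : X → ℝ) : ℝ :=
  (Pp {x | f x ≠ 1}).toReal + (1 / (1 - α)) * ∫ x in {x | f x ≠ 0}, w x ∂Pu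

/-- If `f*` perfectly separates `P_p` and `P_n`, then `w = 1 − f*` is a feasible weight, the
reweighted unlabeled risk of any `{0,1}`-valued classifier `f` equals its risk on `P_n`, so
`J(f, 1−f*)` is the positive-versus-negative risk of `f`, and `J(f*, 1−f*) = 0`. -/
theorem cvir_perfect_separator_weight {X : Type*} [MeasurableSpace X]
    (Pp Pn : Measure X) [IsProbabilityMeasure Pp] [IsProbabilityMeasure Pn]
    (α : ℝ) (hα : α ∈ Set.Ioo (0:ℝ) 1)
    (Pu : Measure X) (hPu : Pu = ENNReal.ofReal α • Pp + ENNReal.ofReal (1 - α) • Pn)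
    (fstar : X → ℝ) (hfstar_m : Measurable fstar) (hfstar01 : ∀ x, fstar x = 0 ∨ fstar x = 1)
    (hsep : Pp {x | fstar x = 1} = 1 ∧ Pn {x | fstar x = 0} = 1) :
    Feasible Pu α (fun x => 1 - fstar x) ∧
      (∀ f : X → ℝ, Measurable f → (∀ x, f x = 0 ∨ f x = 1) →
        (1 / (1 - α)) * ∫ x in {x | f x ≠ 0}, (1 - fstar x) ∂Pu =
            (Pn {x | f x ≠ 0}).toReal ∧
          cvirJ Pp Pu α f (fun x => 1 - fstar x) =
            (Pp {x | f x ≠ 1}).toReal + (Pn {x | f x ≠ 0}).toReal) ∧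
      cvirJ Pp Pu α fstar (fun x => 1 - fstar x) = 0 := by
  obtain ⟨hp1, hn0⟩ := hsep
  obtain ⟨hα0, hα1⟩ := hα
  have h1α : (0:ℝ) < 1 - α := by linarith
  set s : Set X := {x | fstar x = 0} with hs_def
  have hs : MeasurableSet s := hfstar_m (measurableSet_singleton 0)
  have hind : (fun x => 1 - fstar x) = s.indicator (fun _ => (1:ℝ)) := by
    funext x
    rcases hfstar01 x with h | h <;> simp [Set.indicator, hs_def, h]
  -- Pp s = 0
  have hPps : Pp s = 0 := by
    have hsub : s ⊆ {x | fstar x = 1}ᶜ := by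
      intro x hx
      simp only [hs_def, Set.mem_setOf_eq] at hx
      simp [Set.mem_compl_iff, hx]
    have : Pp {x | fstar x = 1}ᶜ = 0 :=
      (prob_compl_eq_zero_iff (hfstar_m (measurableSet_singleton 1))).mpr hp1
    exact le_antisymm (le_trans (measure_mono hsub) this.le) (zero_le)
  have hPnsc : Pn sᶜ = 0 := by
    exact (prob_compl_eq_zero_iff hs).mpr hn0
  -- key integral computation
  have key : ∀ t : Set X, MeasurableSet t →
      ∫ x in t, (1 - fstar x) ∂Pu = (Pu (s ∩ t)).toReal := by
    intro t ht
    rw [hind, integral_indicator hs, setIntegral_const, measureReal_def, Measure.restrict_apply hs,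
      smul_eq_mul, mul_one]
  have hPu_inter : ∀ t : Set X, Pu (s ∩ t) = ENNReal.ofReal (1 - α) * Pn t := by
    intro t
    have hPn_inter : Pn (s ∩ t) = Pn t := by
      rw [Set.inter_comm]
      exact measure_inter_conull hPnsc
    have hPp_inter : Pp (s ∩ t) = 0 :=
      le_antisymm (le_trans (measure_mono Set.inter_subset_left) hPps.le) (zero_le)
    rw [hPu, Measure.add_apply, Measure.smul_apply, Measure.smul_apply, smul_eq_mul,
      smul_eq_mul, hPp_inter, hPn_inter, mul_zero, zero_add]
  have htoReal : ∀ t : Set X, (ENNReal.ofReal (1 - α) * Pn t).toReal = (1 - α) * (Pn t).toReal := by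
    intro t
    rw [ENNReal.toReal_mul, ENNReal.toReal_ofReal h1α.le]
  have key2 : ∀ t : Set X, MeasurableSet t →
      (1 / (1 - α)) * ∫ x in t, (1 - fstar x) ∂Pu = (Pn t).toReal := by
    intro t ht
    rw [key t ht, hPu_inter, htoReal]
    field_simp
  refine ⟨⟨by fun_prop, ?_, ?_⟩, ?_, ?_⟩
  · intro x
    rcases hfstar01 x with h | h <;> simp [h]
  · have := key Set.univ MeasurableSet.univ
    rw [Measure.restrict_univ] at this
    rw [this, hPu_inter, htoReal]
    simp
  · intro f hf hf01
    have ht : MeasurableSet {x | f x ≠ 0} :=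
      (hf (measurableSet_singleton 0)).compl
    refine ⟨key2 _ ht, ?_⟩
    rw [cvirJ, key2 _ ht]
  · have ht : MeasurableSet {x | fstar x ≠ 0} :=
      (hfstar_m (measurableSet_singleton 0)).compl
    rw [cvirJ, key2 _ ht]
    have h1 : Pp {x | fstar x ≠ 1} = 0 := by
      have : {x | fstar x ≠ 1} = {x | fstar x = 1}ᶜ := rfl
      rw [this]
      exact (prob_compl_eq_zero_iff (hfstar_m (measurableSet_singleton 1))).mpr hp1
    have h2 : Pn {x | fstar x ≠ 0} = 0 := by
      have : {x | fstar x ≠ 0} = sᶜ := rfl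
      rw [this]; exact hPnsc
    simp [h1, h2]
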